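/- Let a₁, a₂, a₃ be distinct nonzero points of 𝔻 satisfying a₁ + \bar{a₁}a₂a₃ = a₂ + a₃, and let B(z) = z ∏_{i=1}^{3}(z-a_i)/(1-\bar{a_i}z). Then B can be decomposed as B = B₂ ∘ B₁ with B₁(z) = z(z-a₁)/(1-\bar{a₁}z) and B₂(z) = z(z+a₂a₃)/(1+\overline{a₂a₃}z). -/

import Mathlib

open Complex

lemma aux_ne (a z : ℂ) (ha : ‖a‖ < 1) (hz : ‖z‖ < 1) :
    1 - (starRingEnd ℂ) a * z ≠ 0 := by
  intro h
  have h1 : (starRingEnd ℂ) a * z = 1 := by linear_combination -h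
  have : ‖(starRingEnd ℂ) a * z‖ < 1 := by
    rw [norm_mul, Complex.norm_conj]
    calc ‖a‖ * ‖z‖ ≤ ‖a‖ * 1 :=
          mul_le_mul_of_nonneg_left hz.le (norm_nonneg a)
      _ = ‖a‖ := mul_one _
      _ < 1 := ha
  rw [h1, norm_one] at this
  exact lt_irrefl 1 this

theorem degree_four_decomposition (a₁ a₂ a₃ : ℂ)
    (h₁ : ‖a₁‖ < 1) (h₂ : ‖a₂‖ < 1) (h₃ : ‖a₃‖ < 1)
    (h₁0 : a₁ ≠ 0) (h₂0 : a₂ ≠ 0) (h₃0 : a₃ ≠ 0)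
    (h12 : a₁ ≠ a₂) (h13 : a₁ ≠ a₃) (h23 : a₂ ≠ a₃)
    (hcond : a₁ + (starRingEnd ℂ) a₁ * a₂ * a₃ = a₂ + a₃) :
    ∀ z : ℂ, ‖z‖ < 1 →
      z * ((z - a₁) / (1 - (starRingEnd ℂ) a₁ * z)) *
        ((z - a₂) / (1 - (starRingEnd ℂ) a₂ * z)) *
        ((z - a₃) / (1 - (starRingEnd ℂ) a₃ * z)) =
      (z * ((z - a₁) / (1 - (starRingEnd ℂ) a₁ * z))) *
        ((z * ((z - a₁) / (1 - (starRingEnd ℂ) a₁ * z))) + a₂ * a₃) /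
        (1 + (starRingEnd ℂ) (a₂ * a₃) * (z * ((z - a₁) / (1 - (starRingEnd ℂ) a₁ * z)))) := by
  intro z hz
  have e1 : 1 - (starRingEnd ℂ) a₁ * z ≠ 0 := aux_ne a₁ z h₁ hz
  have e2 : 1 - (starRingEnd ℂ) a₂ * z ≠ 0 := aux_ne a₂ z h₂ hz
  have e3 : 1 - (starRingEnd ℂ) a₃ * z ≠ 0 := aux_ne a₃ z h₃ hz
  have e1' : 1 - z * (starRingEnd ℂ) a₁ ≠ 0 := by rwa [mul_comm]
  have hconj : (starRingEnd ℂ) a₁ + a₁ * (starRingEnd ℂ) a₂ * (starRingEnd ℂ) a₃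
      = (starRingEnd ℂ) a₂ + (starRingEnd ℂ) a₃ := by
    have := congrArg (starRingEnd ℂ) hcond
    simpa using this
  have hden : 1 + (starRingEnd ℂ) (a₂ * a₃) * (z * ((z - a₁) / (1 - (starRingEnd ℂ) a₁ * z)))
      = (1 - (starRingEnd ℂ) a₂ * z) * (1 - (starRingEnd ℂ) a₃ * z) / (1 - (starRingEnd ℂ) a₁ * z) := by
    rw [map_mul]
    field_simp
    linear_combination (-z) * hconj
  have hnum : z * ((z - a₁) / (1 - (starRingEnd ℂ) a₁ * z)) + a₂ * a₃
      = (z - a₂) * (z - a₃) / (1 - (starRingEnd ℂ) a₁ * z) := by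
    field_simp
    linear_combination (-z) * hcond
  rw [hden, hnum]
  field_simp
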